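/- Let r ≥ 1 and let J ∈ M_r(ℂ) be the regular nilpotent Jordan block, i.e. J_{i,i+1} = 1 for 1 ≤ i ≤ r−1 and all other entries 0. Then the closure, in the Euclidean topology on M_r(ℂ), of the conjugation orbit {g J g⁻¹ : g ∈ GL_r(ℂ)} is exactly the nilpotent cone {x ∈ M_r(ℂ) : x^r = 0}. -/

import Mathlib

open Matrix Filter

namespace RegNilAux

variable {n : ℕ}

/-- Strictly upper triangular. -/
def SU (T : Matrix (Fin n) (Fin n) ℂ) : Prop := ∀ i j : Fin n, (j : ℕ) ≤ i → T i j = 0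

lemma SU.pow_apply_eq_zero {T : Matrix (Fin n) (Fin n) ℂ} (hT : SU T) :
    ∀ (m : ℕ) (i j : Fin n), (j : ℕ) < i + m → (T ^ m) i j = 0 := by
  intro m
  induction m with
  | zero =>
    intro i j h
    rw [pow_zero, Matrix.one_apply_ne]
    intro e; rw [e] at h; omega
  | succ m ih =>
    intro i j h
    rw [pow_succ', Matrix.mul_apply]
    apply Finset.sum_eq_zero
    intro k _
    by_cases hk : (k : ℕ) ≤ i
    · rw [hT i k hk, zero_mul]
    · rw [ih k j (by omega), mul_zero]

lemma SU.pow_corner_ne_zero {T : Matrix (Fin n) (Fin n) ℂ} (hT : SU T)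
    (hsd : ∀ (i : ℕ) (h : i + 1 < n), T ⟨i, by omega⟩ ⟨i + 1, h⟩ ≠ 0) :
    ∀ (m : ℕ) (i j : Fin n), (j : ℕ) = i + m → (T ^ m) i j ≠ 0 := by
  intro m
  induction m with
  | zero =>
    intro i j h
    have : i = j := Fin.ext (by omega)
    subst this
    rw [pow_zero, Matrix.one_apply_eq]
    exact one_ne_zero
  | succ m ih =>
    intro i j h
    have hi1 : (i : ℕ) + 1 < n := by omega
    set k : Fin n := ⟨(i : ℕ) + 1, hi1⟩ with hk
    rw [pow_succ', Matrix.mul_apply, Finset.sum_eq_single k]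
    · exact mul_ne_zero (hsd i hi1) (ih k j (by simp [hk]; omega))
    · intro b _ hb
      have hbk : (b : ℕ) ≠ (i : ℕ) + 1 := fun e => hb (Fin.ext (by simp [hk, e]))
      by_cases hbi : (b : ℕ) ≤ i
      · rw [hT i b hbi, zero_mul]
      · rw [hT.pow_apply_eq_zero m b j (by omega), mul_zero]
    · intro hk'; exact absurd (Finset.mem_univ k) hk'

/-- A strictly upper triangular matrix with nonzero superdiagonal is conjugate to `J`. -/
lemma conj_J {r : ℕ} (hr : 1 ≤ r) (J : Matrix (Fin r) (Fin r) ℂ)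
    (hJ : ∀ i j : Fin r, J i j = if (i : ℕ) + 1 = (j : ℕ) then 1 else 0)
    (T : Matrix (Fin r) (Fin r) ℂ) (hT : SU T)
    (hsd : ∀ (i : ℕ) (h : i + 1 < r), T ⟨i, by omega⟩ ⟨i + 1, h⟩ ≠ 0) :
    ∃ g : (Matrix (Fin r) (Fin r) ℂ)ˣ,
      T = (g : Matrix (Fin r) (Fin r) ℂ) * J * ((g⁻¹ : _ˣ) : Matrix (Fin r) (Fin r) ℂ) := by
  obtain ⟨last, hlv⟩ : ∃ l : Fin r, (l : ℕ) = r - 1 := ⟨⟨r - 1, by omega⟩, rfl⟩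
  set h : Matrix (Fin r) (Fin r) ℂ :=
    Matrix.of (fun i j => (T ^ (r - 1 - (j : ℕ))) i last) with hh
  have happ : ∀ i j, h i j = (T ^ (r - 1 - (j : ℕ))) i last := fun _ _ => rfl
  have hdiag : ∀ i : Fin r, h i i ≠ 0 := by
    intro i
    rw [happ]
    exact hT.pow_corner_ne_zero hsd (r - 1 - (i : ℕ)) i last (by omega)
  have htri : h.BlockTriangular id := by
    intro i j hij
    rw [happ]
    have hij' : (j : ℕ) < (i : ℕ) := hij
    exact hT.pow_apply_eq_zero _ i last (by omega)
  have hdet : h.det ≠ 0 := by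
    rw [Matrix.det_of_upperTriangular htri]
    exact Finset.prod_ne_zero_iff.mpr fun i _ => hdiag i
  have hu : IsUnit h := (Matrix.isUnit_iff_isUnit_det h).mpr hdet.isUnit
  obtain ⟨g, hg⟩ := hu
  have key : h * J = T * h := by
    ext i j
    rw [Matrix.mul_apply, Matrix.mul_apply]
    have hrhs : ∑ k, T i k * h k j = (T ^ (r - (j : ℕ))) i last := by
      have : ∑ k, T i k * h k j = (T * T ^ (r - 1 - (j : ℕ))) i last := by
        rw [Matrix.mul_apply]
        exact Finset.sum_congr rfl fun k _ => by rw [happ]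
      have he : r - 1 - (j : ℕ) + 1 = r - (j : ℕ) := by omega
      rw [this, ← pow_succ', he]
    rcases Nat.eq_zero_or_pos (j : ℕ) with h0 | hpos
    · have hlhs : ∑ k, h i k * J k j = 0 := by
        apply Finset.sum_eq_zero
        intro k _
        rw [hJ, if_neg (by omega), mul_zero]
      rw [hlhs, hrhs]
      have : r - (j : ℕ) = r := by omega
      rw [this]
      exact (hT.pow_apply_eq_zero r i last (by omega)).symm
    · obtain ⟨jp, hjpv⟩ : ∃ l : Fin r, (l : ℕ) = (j : ℕ) - 1 := ⟨⟨(j : ℕ) - 1, by omega⟩, rfl⟩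
      have hlhs : ∑ k, h i k * J k j = h i jp := by
        rw [Finset.sum_eq_single jp]
        · rw [hJ, if_pos (by omega), mul_one]
        · intro b _ hb
          rw [hJ, if_neg, mul_zero]
          intro e
          exact hb (Fin.ext (by omega))
        · intro hk'; exact absurd (Finset.mem_univ jp) hk'
      rw [hlhs, hrhs, happ]
      have he2 : r - 1 - (jp : ℕ) = r - (j : ℕ) := by omega
      rw [he2]
  refine ⟨g, ?_⟩
  rw [Units.eq_mul_inv_iff_mul_eq, hg]
  exact key.symm

/-- Embed an `n × n` matrix into the lower-right corner of an `(n+1) × (n+1)` matrix,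
with a `1` in the top-left corner. -/
def ext1 (a : Matrix (Fin n) (Fin n) ℂ) : Matrix (Fin (n + 1)) (Fin (n + 1)) ℂ :=
  Matrix.of fun i j =>
    Fin.cases (Fin.cases 1 (fun _ => 0) j) (fun i' => Fin.cases 0 (fun j' => a i' j') j) i

@[simp] lemma ext1_zero_zero (a : Matrix (Fin n) (Fin n) ℂ) : ext1 a 0 0 = 1 := rfl
@[simp] lemma ext1_zero_succ (a : Matrix (Fin n) (Fin n) ℂ) (j : Fin n) :
    ext1 a 0 j.succ = 0 := by simp [ext1]
@[simp] lemma ext1_succ_zero (a : Matrix (Fin n) (Fin n) ℂ) (i : Fin n) :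
    ext1 a i.succ 0 = 0 := by simp [ext1]
@[simp] lemma ext1_succ_succ (a : Matrix (Fin n) (Fin n) ℂ) (i j : Fin n) :
    ext1 a i.succ j.succ = a i j := by simp [ext1]

lemma ext1_mul (a b : Matrix (Fin n) (Fin n) ℂ) : ext1 a * ext1 b = ext1 (a * b) := by
  ext i j
  rw [Matrix.mul_apply, Fin.sum_univ_succ]
  induction i using Fin.cases with
  | zero =>
    induction j using Fin.cases with
    | zero => simp
    | succ j' => simp
  | succ i' =>
    induction j using Fin.cases with
    | zero => simp
    | succ j' => simp [Matrix.mul_apply]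

lemma ext1_one : ext1 (1 : Matrix (Fin n) (Fin n) ℂ) = 1 := by
  ext i j
  induction i using Fin.cases with
  | zero =>
    induction j using Fin.cases with
    | zero => simp [Matrix.one_apply]
    | succ j' => simp [Matrix.one_apply, (Fin.succ_ne_zero j').symm]
  | succ i' =>
    induction j using Fin.cases with
    | zero => simp [Matrix.one_apply, Fin.succ_ne_zero i']
    | succ j' => simp [Matrix.one_apply, Fin.succ_inj]

/-- Every nilpotent complex matrix is conjugate to a strictly upper triangular one. -/
lemma exists_triangular :
    ∀ (n : ℕ) (x : Matrix (Fin n) (Fin n) ℂ), IsNilpotent x →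
      ∃ g : (Matrix (Fin n) (Fin n) ℂ)ˣ,
        SU (((g⁻¹ : _ˣ) : Matrix (Fin n) (Fin n) ℂ) * x * (g : Matrix (Fin n) (Fin n) ℂ)) := by
  intro n
  induction n with
  | zero =>
    intro x _
    exact ⟨1, fun i _ _ => i.elim0⟩
  | succ n ih =>
    intro x hx
    obtain ⟨m, hm⟩ := hx
    -- the determinant vanishes
    have hm0 : m ≠ 0 := by
      rintro rfl
      rw [pow_zero] at hm
      have := congrFun (congrFun hm 0) 0
      simp [Matrix.one_apply] at this
    have hdet : x.det = 0 := by
      have : x.det ^ m = 0 := by rw [← Matrix.det_pow, hm, Matrix.det_zero]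
      exact pow_eq_zero_iff hm0 |>.mp this
    obtain ⟨v, hv0, hv⟩ := (Matrix.exists_mulVec_eq_zero_iff).mpr hdet
    obtain ⟨i0, hi0'⟩ := Function.ne_iff.mp hv0
    have hi0 : v i0 ≠ 0 := by simpa using hi0'
    -- invertible matrix with first column v
    set P : Matrix (Fin (n + 1)) (Fin (n + 1)) ℂ :=
      ((1 : Matrix (Fin (n + 1)) (Fin (n + 1)) ℂ).updateCol i0 v).submatrix id
        (Equiv.swap 0 i0) with hP
    have hPcol : ∀ i, P i 0 = v i := by
      intro i
      simp [hP, Matrix.submatrix_apply, Equiv.swap_apply_left, Matrix.updateCol_apply]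
    have hPdet : P.det ≠ 0 := by
      rw [hP, Matrix.det_permute']
      have : ((1 : Matrix (Fin (n + 1)) (Fin (n + 1)) ℂ).updateCol i0 v).det = v i0 := by
        rw [← Matrix.cramer_apply, Matrix.cramer_one]
        rfl
      rw [this]
      simp only [ne_eq, mul_eq_zero, not_or]
      refine ⟨?_, hi0⟩
      rcases Int.units_eq_one_or (Equiv.Perm.sign (Equiv.swap (0 : Fin (n+1)) i0)) with h | h <;>
        simp [h]
    have hPu : IsUnit P := (Matrix.isUnit_iff_isUnit_det P).mpr hPdet.isUnit
    obtain ⟨u, hu⟩ := hPu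
    set y : Matrix (Fin (n + 1)) (Fin (n + 1)) ℂ :=
      ((u⁻¹ : _ˣ) : Matrix (Fin (n+1)) (Fin (n+1)) ℂ) * x * (u : Matrix (Fin (n+1)) (Fin (n+1)) ℂ)
      with hy
    have hycol : ∀ i, y i 0 = 0 := by
      intro i
      have hxP : ∀ i, (x * P) i 0 = 0 := by
        intro i
        rw [Matrix.mul_apply]
        simp_rw [hPcol]
        have := congrFun hv i
        rwa [Matrix.mulVec, dotProduct] at this
      rw [hy, mul_assoc, hu, Matrix.mul_apply]
      exact Finset.sum_eq_zero fun k _ => by rw [hxP k, mul_zero]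
    have hynil : ∀ k, y ^ k = ((u⁻¹ : _ˣ) : Matrix (Fin (n+1)) (Fin (n+1)) ℂ) * x ^ k *
        (u : Matrix (Fin (n+1)) (Fin (n+1)) ℂ) := by
      intro k
      rw [hy]
      have := Units.conj_pow' u x k
      simpa using this
    set x' : Matrix (Fin n) (Fin n) ℂ := y.submatrix Fin.succ Fin.succ with hx'
    have hsub : ∀ k, x' ^ k = (y ^ k).submatrix Fin.succ Fin.succ := by
      intro k
      induction k with
      | zero =>
        ext i j
        simp [Matrix.one_apply, Fin.succ_inj]
      | succ k ihk =>
        ext i j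
        rw [pow_succ', Matrix.mul_apply, pow_succ']
        simp only [Matrix.submatrix_apply]
        rw [Matrix.mul_apply, Fin.sum_univ_succ, hycol, zero_mul, zero_add]
        apply Finset.sum_congr rfl
        intro k' _
        rw [ihk]
        rfl
    have hx'nil : IsNilpotent x' := by
      refine ⟨m, ?_⟩
      rw [hsub, hynil, hm]
      ext i j
      simp
    obtain ⟨w, hw⟩ := ih x' hx'nil
    set W : (Matrix (Fin (n + 1)) (Fin (n + 1)) ℂ)ˣ :=
      ⟨ext1 (w : Matrix (Fin n) (Fin n) ℂ), ext1 ((w⁻¹ : _ˣ) : Matrix (Fin n) (Fin n) ℂ),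
        by rw [ext1_mul, Units.mul_inv, ext1_one],
        by rw [ext1_mul, Units.inv_mul, ext1_one]⟩ with hW
    refine ⟨u * W, ?_⟩
    have hcoe : ((u * W : _ˣ) : Matrix (Fin (n+1)) (Fin (n+1)) ℂ) =
        (u : Matrix (Fin (n+1)) (Fin (n+1)) ℂ) * (W : Matrix (Fin (n+1)) (Fin (n+1)) ℂ) := rfl
    have hcoeinv : (((u * W)⁻¹ : _ˣ) : Matrix (Fin (n+1)) (Fin (n+1)) ℂ) =
        ((W⁻¹ : _ˣ) : Matrix (Fin (n+1)) (Fin (n+1)) ℂ) *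
        ((u⁻¹ : _ˣ) : Matrix (Fin (n+1)) (Fin (n+1)) ℂ) := by
      rw [_root_.mul_inv_rev, Units.val_mul]
    rw [hcoe, hcoeinv]
    have heq : ((W⁻¹ : _ˣ) : Matrix (Fin (n+1)) (Fin (n+1)) ℂ) *
        ((u⁻¹ : _ˣ) : Matrix (Fin (n+1)) (Fin (n+1)) ℂ) * x *
        ((u : Matrix (Fin (n+1)) (Fin (n+1)) ℂ) * (W : Matrix (Fin (n+1)) (Fin (n+1)) ℂ)) =
        ext1 ((w⁻¹ : _ˣ) : Matrix (Fin n) (Fin n) ℂ) * y *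
          ext1 (w : Matrix (Fin n) (Fin n) ℂ) := by
      have h1 : ((W⁻¹ : _ˣ) : Matrix (Fin (n+1)) (Fin (n+1)) ℂ) =
          ext1 ((w⁻¹ : _ˣ) : Matrix (Fin n) (Fin n) ℂ) := rfl
      have h2 : (W : Matrix (Fin (n+1)) (Fin (n+1)) ℂ) =
          ext1 (w : Matrix (Fin n) (Fin n) ℂ) := rfl
      rw [h1, h2, hy]
      simp only [mul_assoc]
    rw [heq]
    -- now show strict upper triangularity
    set a : Matrix (Fin n) (Fin n) ℂ := ((w⁻¹ : _ˣ) : Matrix (Fin n) (Fin n) ℂ) with ha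
    set b : Matrix (Fin n) (Fin n) ℂ := (w : Matrix (Fin n) (Fin n) ℂ) with hb
    intro i j hij
    have hout : ∀ (i : Fin (n + 1)), (ext1 a * y) i 0 = 0 := by
      intro i
      rw [Matrix.mul_apply]
      exact Finset.sum_eq_zero fun k _ => by rw [hycol k, mul_zero]
    induction j using Fin.cases with
    | zero =>
      rw [Matrix.mul_apply, Fin.sum_univ_succ]
      simp only [ext1_succ_zero, mul_zero]
      rw [hout, zero_mul, zero_add]
      exact Finset.sum_eq_zero fun k _ => by simp
    | succ j' =>
      induction i using Fin.cases with
      | zero => simp at hij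
      | succ i' =>
        have hij' : (j' : ℕ) ≤ (i' : ℕ) := by
          simp only [Fin.val_succ] at hij; omega
        rw [Matrix.mul_apply, Fin.sum_univ_succ]
        simp only [ext1_zero_succ]
        have hblock : ∀ l' : Fin n, (ext1 a * y) i'.succ l'.succ = (a * x') i' l' := by
          intro l'
          rw [Matrix.mul_apply, Fin.sum_univ_succ, ext1_succ_zero, zero_mul, zero_add,
            Matrix.mul_apply]
          apply Finset.sum_congr rfl
          intro k' _
          rw [ext1_succ_succ]
          rfl
        rw [mul_zero, zero_add]
        have : ∀ l' : Fin n, (ext1 a * y) i'.succ l'.succ * ext1 b l'.succ j'.succ =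
            (a * x') i' l' * b l' j' := by
          intro l'
          rw [hblock, ext1_succ_succ]
        rw [Finset.sum_congr rfl fun l' _ => this l']
        have := hw i' j' hij'
        rw [← Matrix.mul_apply] at *
        rw [ha, hb] at *
        exact this

end RegNilAux

open RegNilAux

/-- The closure (in the Euclidean topology on `M_r(ℂ)`) of the conjugation orbit of the
regular nilpotent Jordan block is the nilpotent cone `{x : x ^ r = 0}`. -/
theorem regular_nilpotent_orbit_closure (r : ℕ) (hr : 1 ≤ r)
    (J : Matrix (Fin r) (Fin r) ℂ)
    (hJ : ∀ i j : Fin r, J i j = if (i : ℕ) + 1 = (j : ℕ) then 1 else 0) :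
    closure {x : Matrix (Fin r) (Fin r) ℂ |
        ∃ g : (Matrix (Fin r) (Fin r) ℂ)ˣ,
          x = (g : Matrix (Fin r) (Fin r) ℂ) * J * ((g⁻¹ : (Matrix (Fin r) (Fin r) ℂ)ˣ) : Matrix (Fin r) (Fin r) ℂ)} =
      {x : Matrix (Fin r) (Fin r) ℂ | x ^ r = 0} := by
  have hJSU : SU J := by
    intro i j hij
    rw [hJ, if_neg (by omega)]
  have hJr : J ^ r = 0 := by
    ext i j
    rw [hJSU.pow_apply_eq_zero r i j (by omega)]
    simp
  apply Set.Subset.antisymm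
  · -- closure of orbit ⊆ nilpotent cone
    apply closure_minimal
    · rintro x ⟨g, rfl⟩
      show _ ^ r = 0
      rw [Units.conj_pow, hJr, mul_zero, zero_mul]
    · exact isClosed_eq (continuous_pow r) continuous_const
  · -- nilpotent cone ⊆ closure of orbit
    intro x hx
    obtain ⟨g, hg⟩ := exists_triangular r x ⟨r, hx⟩
    set T : Matrix (Fin r) (Fin r) ℂ :=
      ((g⁻¹ : _ˣ) : Matrix (Fin r) (Fin r) ℂ) * x * (g : Matrix (Fin r) (Fin r) ℂ) with hT
    have hxT : x = (g : Matrix (Fin r) (Fin r) ℂ) * T *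
        ((g⁻¹ : _ˣ) : Matrix (Fin r) (Fin r) ℂ) := by
      rw [hT]
      calc x = ((g : Matrix (Fin r) (Fin r) ℂ) * ((g⁻¹ : _ˣ) : Matrix (Fin r) (Fin r) ℂ)) * x *
          (((g : Matrix (Fin r) (Fin r) ℂ)) * ((g⁻¹ : _ˣ) : Matrix (Fin r) (Fin r) ℂ)) := by
            rw [Units.mul_inv]; simp
        _ = _ := by simp only [mul_assoc]
    set S : Matrix (Fin r) (Fin r) ℂ :=
      Matrix.of (fun i j => if (i : ℕ) + 1 = (j : ℕ) ∧ T i j = 0 then 1 else 0) with hS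
    set δ : ℕ → ℂ := fun k => ((1 : ℝ) / ((k : ℝ) + 1) : ℝ) with hδ
    have hδ0 : ∀ k, δ k ≠ 0 := by
      intro k
      simp only [hδ]
      rw [Ne, Complex.ofReal_eq_zero]
      positivity
    have hmem : ∀ k, (g : Matrix (Fin r) (Fin r) ℂ) * (T + δ k • S) *
        ((g⁻¹ : _ˣ) : Matrix (Fin r) (Fin r) ℂ) ∈
        {x : Matrix (Fin r) (Fin r) ℂ |
          ∃ g : (Matrix (Fin r) (Fin r) ℂ)ˣ,
            x = (g : Matrix (Fin r) (Fin r) ℂ) * J *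
              ((g⁻¹ : (Matrix (Fin r) (Fin r) ℂ)ˣ) : Matrix (Fin r) (Fin r) ℂ)} := by
      intro k
      have hTSU : SU (T + δ k • S) := by
        intro i j hij
        have h1 : T i j = 0 := hg i j hij
        have h2 : S i j = 0 := by
          show (if (i : ℕ) + 1 = (j : ℕ) ∧ T i j = 0 then (1:ℂ) else 0) = 0
          rw [if_neg]; rintro ⟨h, -⟩; omega
        simp [h1, h2]
      have hTsd : ∀ (i : ℕ) (h : i + 1 < r),
          (T + δ k • S) ⟨i, by omega⟩ ⟨i + 1, h⟩ ≠ 0 := by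
        intro i h
        set i1 : Fin r := ⟨i, by omega⟩
        set j1 : Fin r := ⟨i + 1, h⟩
        show T i1 j1 + δ k * S i1 j1 ≠ 0
        by_cases hT0 : T i1 j1 = 0
        · have : S i1 j1 = 1 := by
            show (if (i1 : ℕ) + 1 = (j1 : ℕ) ∧ T i1 j1 = 0 then (1:ℂ) else 0) = 1
            rw [if_pos ⟨rfl, hT0⟩]
          rw [hT0, this, zero_add, mul_one]
          exact hδ0 k
        · have : S i1 j1 = 0 := by
            show (if (i1 : ℕ) + 1 = (j1 : ℕ) ∧ T i1 j1 = 0 then (1:ℂ) else 0) = 0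
            rw [if_neg]; rintro ⟨-, h'⟩; exact hT0 h'
          rw [this, mul_zero, add_zero]
          exact hT0
      obtain ⟨h, hh⟩ := conj_J hr J hJ (T + δ k • S) hTSU hTsd
      refine ⟨g * h, ?_⟩
      rw [hh]
      have : (((g * h)⁻¹ : _ˣ) : Matrix (Fin r) (Fin r) ℂ) =
          ((h⁻¹ : _ˣ) : Matrix (Fin r) (Fin r) ℂ) * ((g⁻¹ : _ˣ) : Matrix (Fin r) (Fin r) ℂ) := by
        rw [_root_.mul_inv_rev, Units.val_mul]
      rw [this, Units.val_mul]
      simp only [mul_assoc]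
    have hδtend : Tendsto δ atTop (nhds 0) := by
      have h1 : Tendsto (fun k : ℕ => (1 : ℝ) / ((k : ℝ) + 1)) atTop (nhds 0) :=
        tendsto_one_div_add_atTop_nhds_zero_nat
      have := (Complex.continuous_ofReal.tendsto 0).comp h1
      simpa [hδ, Function.comp_def] using this
    have htend : Tendsto (fun k => (g : Matrix (Fin r) (Fin r) ℂ) * (T + δ k • S) *
        ((g⁻¹ : _ˣ) : Matrix (Fin r) (Fin r) ℂ)) atTop (nhds x) := by
      have hrw : ∀ k, (g : Matrix (Fin r) (Fin r) ℂ) * (T + δ k • S) *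
          ((g⁻¹ : _ˣ) : Matrix (Fin r) (Fin r) ℂ) =
          x + δ k • ((g : Matrix (Fin r) (Fin r) ℂ) * S *
            ((g⁻¹ : _ˣ) : Matrix (Fin r) (Fin r) ℂ)) := by
        intro k
        rw [hxT]
        rw [Matrix.mul_add, Matrix.add_mul, mul_smul_comm, smul_mul_assoc]
      simp_rw [hrw]
      have h0 : Tendsto (fun k => δ k • ((g : Matrix (Fin r) (Fin r) ℂ) * S *
          ((g⁻¹ : _ˣ) : Matrix (Fin r) (Fin r) ℂ))) atTop
          (nhds ((0 : ℂ) • ((g : Matrix (Fin r) (Fin r) ℂ) * S *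
          ((g⁻¹ : _ˣ) : Matrix (Fin r) (Fin r) ℂ)))) :=
        hδtend.smul_const _
      rw [zero_smul] at h0
      have hfin := (tendsto_const_nhds (x := x)).add h0
      simpa using hfin
    exact mem_closure_of_tendsto htend (Filter.Eventually.of_forall hmem)
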